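/- Let G : L₂^p → L₂^q be a bounded linear operator and n := max(p,q). For α ∈ ℝ define G_α : L₂^p → L₂^n by G_α u := ι_{n←q}(Gu) − α·ι_{n←p}(u), and set υ_α := ‖G_α‖ (the operator norm) and ℓ_α := inf_{u∈L₂^p, ‖u‖=1} ‖G_α u‖. Then for any sets Υ, Λ ⊆ ℝ the MIMO SRG of G satisfies: SRG(G) ⊆ ∩_{α∈Υ} { z ∈ ℂ : |z − α| ≤ υ_α }, and for every α ∈ Λ, SRG(G) ∩ { z ∈ ℂ : |z − α| < ℓ_α } = ∅. -/

import Mathlib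

open MeasureTheory ComplexConjugate
open scoped RealInnerProductSpace

/-- `L₂^d = L²([0,∞), ℝ^d)`. -/
noncomputable abbrev L2S (d : ℕ) :=
  MeasureTheory.Lp (EuclideanSpace ℝ (Fin d)) 2 (MeasureTheory.volume.restrict (Set.Ici (0 : ℝ)))

/-- Resize map `ℝ^a → ℝ^b`: zero-padding if `a ≤ b`, projection if `b ≤ a`. -/
noncomputable def resizeCLM (a b : ℕ) :
    EuclideanSpace ℝ (Fin a) →L[ℝ] EuclideanSpace ℝ (Fin b) :=
  LinearMap.toContinuousLinearMap
    { toFun := fun x => WithLp.toLp 2 (fun i => if h : (i : ℕ) < a then x ⟨(i : ℕ), h⟩ else 0)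
      map_add' := by
        intro x y
        ext i
        by_cases h : (i : ℕ) < a <;> simp [PiLp.add_apply, h]
      map_smul' := by
        intro c x
        ext i
        by_cases h : (i : ℕ) < a <;> simp [PiLp.smul_apply, h] }

/-- The induced map on `L₂` spaces; for `a ≤ b` this is the zero-padding embedding `ι_{b←a}`,
for `b ≤ a` the projection `π_{b←a}`. -/
noncomputable def LpResize (a b : ℕ) : L2S a →L[ℝ] L2S b :=
  (resizeCLM a b).compLpL 2 (MeasureTheory.volume.restrict (Set.Ici (0 : ℝ)))

/-- The pairing `Σ_{i < min(p,q)} ∫₀^∞ Δu_i(t)·Δy_i(t) dt`, realized as the inner product of the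
zero-padded signals in `L₂^{max(p,q)}`. -/
noncomputable def mimoPairing {p q : ℕ} (du : L2S p) (dy : L2S q) : ℝ :=
  ⟪LpResize p (max p q) du, LpResize q (max p q) dy⟫

/-- The point `(‖Δy‖/‖Δu‖)·e^{iθ}` with `cos θ` given by the normalized MIMO pairing,
`θ ∈ [0,π]` (equal to `0` when `Δy = 0`). -/
noncomputable def mimoPoint {p q : ℕ} (du : L2S p) (dy : L2S q) : ℂ :=
  ((‖dy‖ / ‖du‖ : ℝ) : ℂ) *
    Complex.exp (Complex.I * ((Real.arccos (mimoPairing du dy / (‖du‖ * ‖dy‖)) : ℝ) : ℂ))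

/-- The MIMO Scaled Relative Graph of an operator `R : L₂^p → L₂^q` (the SRG of the zero-padded
operator on `L₂^{max(p,q)}` over the zero-padded input subspace); both signs of the angle are
included. -/
noncomputable def mimoSRG {p q : ℕ} (R : L2S p → L2S q) : Set ℂ :=
  { z | ∃ u₁ u₂ : L2S p, u₁ ≠ u₂ ∧
      (z = mimoPoint (u₁ - u₂) (R u₁ - R u₂) ∨
        z = conj (mimoPoint (u₁ - u₂) (R u₁ - R u₂))) }

/-- The operator `G_α : L₂^p → L₂^{max(p,q)}`, `G_α u = ι_{n←q}(Gu) − α·ι_{n←p}(u)` with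
`n = max(p,q)`, as a continuous linear map. -/
noncomputable def Galpha {p q : ℕ} (G : L2S p →L[ℝ] L2S q) (α : ℝ) :
    L2S p →L[ℝ] L2S (max p q) :=
  (LpResize q (max p q)).comp G - α • LpResize p (max p q)

set_option maxHeartbeats 1000000

lemma resizeCLM_apply (a b : ℕ) (x : EuclideanSpace ℝ (Fin a)) (i : Fin b) :
    resizeCLM a b x i = if h : (i : ℕ) < a then x ⟨(i : ℕ), h⟩ else 0 := rfl

lemma resize_norm {a b : ℕ} (h : a ≤ b) (x : EuclideanSpace ℝ (Fin a)) :
    ‖resizeCLM a b x‖ = ‖x‖ := by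
  rw [EuclideanSpace.norm_eq, EuclideanSpace.norm_eq]
  congr 1
  set f : ℕ → ℝ := fun i => if h : i < a then ‖x ⟨i, h⟩‖ ^ 2 else 0 with hf
  have h1 : ∑ i : Fin b, ‖resizeCLM a b x i‖ ^ 2 = ∑ i : Fin b, f (i : ℕ) := by
    refine Finset.sum_congr rfl fun i _ => ?_
    rw [resizeCLM_apply, hf]
    by_cases hi : (i : ℕ) < a <;> simp [hi]
  have h2 : ∑ i : Fin a, ‖x i‖ ^ 2 = ∑ i : Fin a, f (i : ℕ) := by
    refine Finset.sum_congr rfl fun i _ => ?_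
    simp [hf, i.isLt]
  rw [h1, h2, Fin.sum_univ_eq_sum_range, Fin.sum_univ_eq_sum_range]
  refine (Finset.sum_subset (Finset.range_subset_range.mpr h) fun i _ hi => ?_).symm
  simp only [Finset.mem_range, not_lt] at hi
  simp [hf, Nat.not_lt.mpr hi]

lemma LpResize_norm {a b : ℕ} (h : a ≤ b) (f : L2S a) : ‖LpResize a b f‖ = ‖f‖ := by
  rw [Lp.norm_def, Lp.norm_def]
  congr 1
  refine eLpNorm_congr_norm_ae ?_
  filter_upwards [ContinuousLinearMap.coeFn_compLp (resizeCLM a b) f] with t ht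
  rw [show ((LpResize a b f : L2S b) : ℝ → EuclideanSpace ℝ (Fin b)) t
      = ((resizeCLM a b).compLp f : ℝ → EuclideanSpace ℝ (Fin b)) t from rfl, ht,
    resize_norm h]

lemma point_calc (r c α : ℝ) (hc : |c| ≤ 1) :
    ‖(r : ℂ) * Complex.exp (Complex.I * ((Real.arccos c : ℝ) : ℂ)) - (α : ℂ)‖ ^ 2
      = r ^ 2 - 2 * α * (r * c) + α ^ 2 := by
  set θ : ℝ := Real.arccos c with hθ
  have h1 : Complex.I * ((θ : ℝ) : ℂ) = ((θ : ℝ) : ℂ) * Complex.I := mul_comm _ _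
  rw [h1, Complex.exp_mul_I, ← Complex.ofReal_cos, ← Complex.ofReal_sin]
  have h2 : (r : ℂ) * ((Real.cos θ : ℂ) + (Real.sin θ : ℂ) * Complex.I) - (α : ℂ)
      = ((r * Real.cos θ - α : ℝ) : ℂ) + ((r * Real.sin θ : ℝ) : ℂ) * Complex.I := by
    push_cast; ring
  rw [h2, Complex.sq_norm, Complex.normSq_apply]
  simp only [Complex.add_re, Complex.add_im, Complex.ofReal_re, Complex.ofReal_im,
    Complex.mul_re, Complex.mul_im, Complex.I_re, Complex.I_im]
  have hc' := abs_le.mp hc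
  have hcos : Real.cos θ = c := Real.cos_arccos hc'.1 hc'.2
  have hsin : Real.sin θ ^ 2 = 1 - c ^ 2 := by
    rw [hθ, Real.sin_arccos, Real.sq_sqrt (by nlinarith)]
  rw [hcos]
  nlinarith [hsin]

lemma sq_eq_to_eq {a b : ℝ} (ha : 0 ≤ a) (hb : 0 ≤ b) (h : a ^ 2 = b ^ 2) : a = b := by
  nlinarith

lemma key {p q : ℕ} (du : L2S p) (dy : L2S q) (α : ℝ) (hdu : du ≠ 0) :
    ‖mimoPoint du dy - (α : ℂ)‖ * ‖du‖
      = ‖LpResize q (max p q) dy - α • LpResize p (max p q) du‖ := by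
  have hnx : ‖LpResize q (max p q) dy‖ = ‖dy‖ := LpResize_norm (le_max_right p q) dy
  have hny : ‖LpResize p (max p q) du‖ = ‖du‖ := LpResize_norm (le_max_left p q) du
  have hdu' : (0 : ℝ) < ‖du‖ := norm_pos_iff.mpr hdu
  have hRsq : ‖LpResize q (max p q) dy - α • LpResize p (max p q) du‖ ^ 2
      = ‖dy‖ ^ 2 - 2 * α * mimoPairing du dy + α ^ 2 * ‖du‖ ^ 2 := by
    rw [norm_sub_sq_real, real_inner_smul_right, real_inner_comm, norm_smul, hnx, hny]
    have : mimoPairing du dy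
        = ⟪LpResize p (max p q) du, LpResize q (max p q) dy⟫ := rfl
    rw [← this]
    rw [Real.norm_eq_abs, mul_pow, sq_abs]
    ring
  by_cases hdy : dy = 0
  · have h0 : ‖dy‖ = (0 : ℝ) := by simp [hdy]
    have hP0 : mimoPairing du dy = 0 := by
      have : LpResize q (max p q) dy = 0 := by rw [hdy]; simp
      rw [mimoPairing, this, inner_zero_right]
    have hc0 : mimoPairing du dy / (‖du‖ * ‖dy‖) = 0 := by rw [hP0, zero_div]
    have hL := point_calc (‖dy‖ / ‖du‖) (mimoPairing du dy / (‖du‖ * ‖dy‖)) α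
      (by rw [hc0]; norm_num)
    refine sq_eq_to_eq (by positivity) (norm_nonneg _) ?_
    rw [mul_pow, show mimoPoint du dy = ((‖dy‖ / ‖du‖ : ℝ) : ℂ) *
        Complex.exp (Complex.I * ((Real.arccos (mimoPairing du dy / (‖du‖ * ‖dy‖)) : ℝ) : ℂ))
        from rfl, hL, hRsq, h0, hP0]
    field_simp
  · have hdy' : (0 : ℝ) < ‖dy‖ := norm_pos_iff.mpr hdy
    have hCS : |mimoPairing du dy| ≤ ‖du‖ * ‖dy‖ := by
      calc |mimoPairing du dy|
          ≤ ‖LpResize p (max p q) du‖ * ‖LpResize q (max p q) dy‖ :=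
            abs_real_inner_le_norm _ _
        _ = ‖du‖ * ‖dy‖ := by rw [hnx, hny]
    have hcabs : |mimoPairing du dy / (‖du‖ * ‖dy‖)| ≤ 1 := by
      rw [abs_div, abs_of_pos (mul_pos hdu' hdy')]
      exact div_le_one_of_le₀ hCS (le_of_lt (mul_pos hdu' hdy'))
    have hL := point_calc (‖dy‖ / ‖du‖) (mimoPairing du dy / (‖du‖ * ‖dy‖)) α hcabs
    refine sq_eq_to_eq (by positivity) (norm_nonneg _) ?_
    rw [mul_pow, show mimoPoint du dy = ((‖dy‖ / ‖du‖ : ℝ) : ℂ) *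
        Complex.exp (Complex.I * ((Real.arccos (mimoPairing du dy / (‖du‖ * ‖dy‖)) : ℝ) : ℂ))
        from rfl, hL, hRsq]
    field_simp



/-- SRG bounds for bounded linear MIMO operators: with `υ_α = ‖G_α‖` (operator
norm) and `ℓ_α = inf_{‖u‖=1} ‖G_α u‖`, for any `Υ, Λ ⊆ ℝ` the MIMO SRG of `G` is contained in
each closed disk `D_{υ_α}(α)`, `α ∈ Υ`, and avoids each open disk of radius `ℓ_α` centered at
`α ∈ Λ`. -/
theorem stmt17 (p q : ℕ) (G : L2S p →L[ℝ] L2S q) (Υ Λ : Set ℝ) :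
    (mimoSRG (G : L2S p → L2S q) ⊆
      ⋂ α ∈ Υ, { z : ℂ | ‖z - (α : ℂ)‖ ≤ ‖Galpha G α‖ }) ∧
    (∀ α ∈ Λ,
      mimoSRG (G : L2S p → L2S q) ∩
        { z : ℂ | ‖z - (α : ℂ)‖ <
            ⨅ u : { u : L2S p // ‖u‖ = 1 }, ‖Galpha G α u.val‖ } = ∅) := by
  have main : ∀ z ∈ mimoSRG (G : L2S p → L2S q), ∀ α : ℝ,
      ∃ du : L2S p, du ≠ 0 ∧ ‖z - (α : ℂ)‖ * ‖du‖ = ‖Galpha G α du‖ := by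
    intro z hz α
    obtain ⟨u₁, u₂, hne, hcase⟩ := hz
    refine ⟨u₁ - u₂, sub_ne_zero.mpr hne, ?_⟩
    have hdu : u₁ - u₂ ≠ 0 := sub_ne_zero.mpr hne
    have hGdu : G u₁ - G u₂ = G (u₁ - u₂) := (map_sub G u₁ u₂).symm
    have habs : ‖z - (α : ℂ)‖
        = ‖mimoPoint (u₁ - u₂) (G (u₁ - u₂)) - (α : ℂ)‖ := by
      rcases hcase with h | h
      · rw [h, hGdu]
      · rw [h, hGdu, show ((α : ℝ) : ℂ) = conj ((α : ℝ) : ℂ) from (Complex.conj_ofReal α).symm,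
          ← map_sub, Complex.norm_conj, Complex.conj_ofReal]
    have hGa : (Galpha G α) (u₁ - u₂)
        = LpResize q (max p q) (G (u₁ - u₂)) - α • LpResize p (max p q) (u₁ - u₂) := by
      simp [Galpha, ContinuousLinearMap.sub_apply, ContinuousLinearMap.smul_apply,
        ContinuousLinearMap.comp_apply]
    rw [habs, key (u₁ - u₂) (G (u₁ - u₂)) α hdu, hGa]
  constructor
  · intro z hz
    simp only [Set.mem_iInter, Set.mem_setOf_eq]
    intro α hα
    obtain ⟨du, hdu, heq⟩ := main z hz α
    have hdu' : (0 : ℝ) < ‖du‖ := norm_pos_iff.mpr hdu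
    have hle : ‖(Galpha G α) du‖ ≤ ‖Galpha G α‖ * ‖du‖ := (Galpha G α).le_opNorm du
    have : ‖z - (α : ℂ)‖ * ‖du‖ ≤ ‖Galpha G α‖ * ‖du‖ := heq ▸ hle
    exact le_of_mul_le_mul_right this hdu'
  · intro α hα
    rw [Set.eq_empty_iff_forall_notMem]
    rintro z ⟨hzS, hzB⟩
    obtain ⟨du, hdu, heq⟩ := main z hzS α
    have hdu' : (0 : ℝ) < ‖du‖ := norm_pos_iff.mpr hdu
    set u : L2S p := ‖du‖⁻¹ • du with hu_def
    have hu : ‖u‖ = 1 := by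
      rw [hu_def, norm_smul, norm_inv, norm_norm]
      field_simp
    haveI : Nonempty { u : L2S p // ‖u‖ = 1 } := ⟨⟨u, hu⟩⟩
    have hbdd : BddBelow (Set.range fun v : { u : L2S p // ‖u‖ = 1 } => ‖(Galpha G α) v.val‖) := by
      refine ⟨0, ?_⟩
      rintro _ ⟨v, rfl⟩
      exact norm_nonneg _
    have hinf := ciInf_le hbdd (⟨u, hu⟩ : { u : L2S p // ‖u‖ = 1 })
    have hGau : ‖(Galpha G α) u‖ = ‖z - (α : ℂ)‖ := by
      rw [hu_def, _root_.map_smul, norm_smul, norm_inv, norm_norm, ← heq]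
      field_simp
    rw [hGau] at hinf
    simp only [Set.mem_setOf_eq] at hzB
    linarith
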